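/- (Theorem 8, value at s = 0.) Let q be real with 0 < q < 1, α ≥ 1 an integer, d an odd positive integer, χ a Dirichlet character modulo d, and x > 0 real. Then L_q^χ(0, x | α) = ( [2:q] / [2:q^d] ) · Σ_{l=0}^{d−1} (−1)^l χ(l) q^l. -/

import Mathlib

open scoped BigOperators

/-- `[x:q] = (q^x - 1)/(q - 1)` with real exponentiation. -/
noncomputable def qNum (q x : ℝ) : ℝ := (q ^ x - 1) / (q - 1)

/-- Dirichlet `q`-`L`-function
`L_q^χ(s,x|α) = [2:q] ∑_{m≥0} q^m χ(m) (-1)^m [x+m:q^α]^{-s}`. -/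
noncomputable def qLfun (q : ℝ) (d : ℕ) (χ : DirichletCharacter ℂ d) (α : ℕ)
    (s : ℂ) (x : ℝ) : ℂ :=
  (qNum q 2 : ℂ) *
    ∑' m : ℕ, (q : ℂ) ^ m * χ (m : ZMod d) * (-1 : ℂ) ^ m *
      ((qNum (q ^ α) (x + (m : ℝ)) : ℝ) : ℂ) ^ (-s)

lemma qNum_two (q : ℝ) (hq : q ≠ 1) : qNum q 2 = q + 1 := by
  have h2 : q ^ (2 : ℝ) = q ^ (2 : ℕ) := by
    rw [← Real.rpow_natCast q 2]; norm_num
  have hne : q - 1 ≠ 0 := sub_ne_zero.mpr hq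
  rw [qNum, h2, div_eq_iff hne]
  ring

theorem statement16 (q : ℝ) (hq0 : 0 < q) (hq1 : q < 1) (α : ℕ) (hα : 1 ≤ α)
    (d : ℕ) (hd0 : 0 < d) (hdo : Odd d) (χ : DirichletCharacter ℂ d)
    (x : ℝ) (hx : 0 < x) :
    qLfun q d χ α 0 x =
      ((qNum q 2 / qNum (q ^ d) 2 : ℝ) : ℂ) *
        ∑ l ∈ Finset.range d, (-1 : ℂ) ^ l * χ (l : ZMod d) * (q : ℂ) ^ l := by
  set f : ℕ → ℂ := fun m => (-(q : ℂ)) ^ m * χ (m : ZMod d) with hf_def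
  have hqd1 : q ^ d < 1 := pow_lt_one₀ hq0.le hq1 hd0.ne'
  have hqd0 : 0 < q ^ d := pow_pos hq0 d
  have hsum : Summable f := by
    apply Summable.of_norm_bounded (g := fun m => q ^ m)
      (summable_geometric_of_lt_one hq0.le hq1)
    intro m
    rw [hf_def]
    calc ‖(-(q : ℂ)) ^ m * χ (m : ZMod d)‖ = ‖(-(q : ℂ)) ^ m‖ * ‖χ (m : ZMod d)‖ :=
          norm_mul _ _
      _ ≤ ‖(-(q : ℂ)) ^ m‖ * 1 := by
          gcongr; exact χ.norm_le_one _
      _ = q ^ m := by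
          rw [mul_one, norm_pow, norm_neg, Complex.norm_real,
            Real.norm_of_nonneg hq0.le]
  have hshift : ∀ m : ℕ, f (m + d) = (-(q : ℂ)) ^ d * f m := by
    intro m
    rw [hf_def]
    simp only [pow_add]
    have : ((m + d : ℕ) : ZMod d) = (m : ZMod d) := by
      push_cast; simp
    rw [this]; ring
  have hkey : (∑ i ∈ Finset.range d, f i) + (-(q : ℂ)) ^ d * ∑' m, f m = ∑' m, f m := by
    rw [← hsum.tsum_mul_left ((-(q : ℂ)) ^ d)]
    rw [← Summable.sum_add_tsum_nat_add d hsum]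
    congr 1
    exact tsum_congr fun b => (hshift b).symm
  have hnegpow : (-(q : ℂ)) ^ d = -(q : ℂ) ^ d := hdo.neg_pow _
  have hS : (1 + (q : ℂ) ^ d) * ∑' m, f m = ∑ i ∈ Finset.range d, f i := by
    rw [hnegpow] at hkey
    linear_combination -hkey
  have hden : (1 + (q : ℂ) ^ d) ≠ 0 := by
    have h : (0 : ℝ) < 1 + q ^ d := by positivity
    simpa using Complex.ofReal_ne_zero.mpr h.ne'
  have hSval : ∑' m, f m = (∑ i ∈ Finset.range d, f i) / (1 + (q : ℂ) ^ d) := by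
    field_simp [← hS]
    rw [← hS]; ring
  have hq2 : qNum q 2 = q + 1 := qNum_two q hq1.ne
  have hqd2 : qNum (q ^ d) 2 = q ^ d + 1 := qNum_two _ hqd1.ne
  rw [qLfun]
  have heq : (∑' m : ℕ, (q : ℂ) ^ m * χ (m : ZMod d) * (-1 : ℂ) ^ m *
      ((qNum (q ^ α) (x + (m : ℝ)) : ℝ) : ℂ) ^ (-(0 : ℂ))) = ∑' m, f m := by
    apply tsum_congr
    intro m
    rw [neg_zero, Complex.cpow_zero, mul_one, hf_def]
    simp only [neg_eq_neg_one_mul (q : ℂ), mul_pow]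
    ring
  rw [heq, hSval, hq2, hqd2]
  have hsum_eq : (∑ i ∈ Finset.range d, f i)
      = ∑ l ∈ Finset.range d, (-1 : ℂ) ^ l * χ (l : ZMod d) * (q : ℂ) ^ l := by
    apply Finset.sum_congr rfl
    intro l _
    rw [hf_def]
    simp only [neg_eq_neg_one_mul (q : ℂ), mul_pow]
    ring
  rw [hsum_eq]
  push_cast
  rw [mul_div_assoc', div_mul_eq_mul_div, add_comm (1 : ℂ) ((q : ℂ) ^ d)]
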